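/- In the simple cycle barrier coverage problem, if λ* > 0, then there exist a covering placement of the cycle with maximum movement equal to λ*, indices i, j with 1 ≤ i ≤ n and i < j < i + n, and real lifts y_i, y_{i+1}, …, y_j with y_{t+1} = y_t + 2r for i ≤ t ≤ j−1 (the sensors are in attached positions), y_i = x_i + λ* (sensor i is moved clockwise by λ*), and y_j = x_j − λ* (sensor j is moved counterclockwise by λ*), such that in this placement, for each i ≤ t ≤ j, the sensor with index ((t−1) mod n) + 1 is placed at the cycle point represented by y_t. -/

import Mathlib

set_option maxHeartbeats 1000000

/-- Cycle case: the placement `y` of sensors `1, …, n` (points of the cycle `ℝ/Lℤ`),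
all with range `r`, covers the whole cycle. -/
def CycCovers (n : ℕ) (L r : ℝ) (y : ℕ → AddCircle L) : Prop :=
  ∀ p : AddCircle L, ∃ i, 1 ≤ i ∧ i ≤ n ∧ dist p (y i) ≤ r

/-- The maximum movement of the placement `y`: the largest cycle-distance between a
sensor's initial point (represented by the real coordinate `x i`) and its placed point. -/
noncomputable def CycMaxMove (n : ℕ) (L : ℝ) (x : ℕ → ℝ) (y : ℕ → AddCircle L) : ℝ :=
  sSup ((fun i => dist ((x i : AddCircle L)) (y i)) '' Set.Icc 1 n)

/-- `λ*` for the cycle: the infimum of the maximum movement over all covering placements. -/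
noncomputable def CycLamStar (n : ℕ) (L r : ℝ) (x : ℕ → ℝ) : ℝ :=
  sInf (CycMaxMove n L x '' {y : ℕ → AddCircle L | CycCovers n L r y})

noncomputable def bcGreedy (r : ℝ) (b : ℕ → ℝ) : ℕ → ℝ
  | 0 => b 0
  | (m+1) => min (b (m+1)) (bcGreedy r b m + 2*r)

lemma bcGreedy_lb (r : ℝ) (b : ℕ → ℝ) :
    ∀ m q, (∀ s, s ≤ m → q ≤ b s + 2*r*((m - s : ℕ) : ℝ)) → q ≤ bcGreedy r b m := by
  intro m
  induction m with
  | zero => intro q h; simpa [bcGreedy] using h 0 le_rfl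
  | succ m ih =>
    intro q h
    rw [bcGreedy, le_min_iff]
    constructor
    · simpa using h (m+1) le_rfl
    · have := ih (q - 2*r) ?_
      · linarith
      · intro s hs
        have h2 := h s (hs.trans (Nat.le_succ m))
        have h3 : ((m + 1 - s : ℕ) : ℝ) = ((m - s : ℕ) : ℝ) + 1 := by
          have h4 : m + 1 - s = (m - s) + 1 := by omega
          rw [h4]; push_cast; ring
        rw [h3] at h2; linarith

lemma bcGreedy_step (r : ℝ) (b : ℕ → ℝ) (m : ℕ) :
    bcGreedy r b (m+1) ≤ bcGreedy r b m + 2*r := min_le_right _ _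

lemma bcGreedy_le (r : ℝ) (b : ℕ → ℝ) (m : ℕ) : bcGreedy r b m ≤ b m := by
  cases m with
  | zero => exact le_of_eq rfl
  | succ m => exact min_le_left _ _

/-- covering of an interval by a chain of sensors with consecutive gaps ≤ 2r. -/
lemma bcCover (r : ℝ) (P : ℕ → ℝ) (i : ℕ) :
    ∀ M, i ≤ M → (∀ t, i ≤ t → t < M → P (t+1) ≤ P t + 2*r) →
    ∀ p, P i - r ≤ p → p ≤ P M + r → ∃ t, i ≤ t ∧ t ≤ M ∧ |p - P t| ≤ r := by
  intro M
  induction M with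
  | zero =>
    intro hiM _ p h1 h2
    interval_cases i
    exact ⟨0, le_rfl, le_rfl, abs_le.2 ⟨by linarith, by linarith⟩⟩
  | succ M ih =>
    intro hiM hgap p h1 h2
    rcases Nat.lt_or_ge i (M+1) with hi | hi
    · have hiM' : i ≤ M := by omega
      rcases le_or_gt p (P M + r) with hp | hp
      · obtain ⟨t, ht1, ht2, ht3⟩ := ih hiM' (fun t ha hb => hgap t ha (by omega)) p h1 hp
        exact ⟨t, ht1, by omega, ht3⟩
      · refine ⟨M+1, by omega, le_rfl, abs_le.2 ⟨?_, by linarith⟩⟩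
        have := hgap M hiM' (by omega)
        linarith
    · have hieq : i = M + 1 := by omega
      subst hieq
      exact ⟨M+1, le_rfl, le_rfl, abs_le.2 ⟨by linarith, by linarith⟩⟩

lemma bcDistCoeLe (L : ℝ) (hL : 0 < L) (a b : ℝ) :
    dist ((a : ℝ) : AddCircle L) ((b : ℝ) : AddCircle L) ≤ |a - b| := by
  rw [dist_eq_norm, ← QuotientAddGroup.mk_sub]
  rcases le_or_gt |a - b| (L / 2) with h | h
  · rw [(AddCircle.norm_coe_eq_abs_iff L hL.ne').2 (by rwa [abs_of_pos hL])]
  · exact (AddCircle.norm_le_half_period L hL.ne').trans (by rw [abs_of_pos hL]; linarith)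

lemma bcDistLift (L : ℝ) (a b : ℝ) :
    ∃ z : ℤ, dist ((a : ℝ) : AddCircle L) ((b : ℝ) : AddCircle L) = |a - b - z * L| := by
  rw [dist_eq_norm, ← QuotientAddGroup.mk_sub, AddCircle.norm_eq]
  exact ⟨_, rfl⟩

lemma bcRep (L : ℝ) (hL : 0 < L) (a : ℝ) (p : AddCircle L) :
    ∃ z : ℝ, z ∈ Set.Ico a (a + L) ∧ (z : AddCircle L) = p := by
  obtain ⟨q, rfl⟩ := QuotientAddGroup.mk_surjective p
  refine ⟨toIcoMod hL a q, toIcoMod_mem_Ico hL a q, ?_⟩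
  refine (QuotientAddGroup.eq_iff_sub_mem).2 ?_
  have h := self_sub_toIcoMod hL a q
  have h2 : toIcoMod hL a q - q = (-(toIcoDiv hL a q)) • L := by rw [neg_smul, ← h]; ring
  rw [h2]
  exact AddSubgroup.zsmul_mem_zmultiples L _

/-- The pair weight: half the extended gap minus the coverage of the in-between sensors. -/
noncomputable def bcW (r : ℝ) (xe : ℕ → ℝ) (a b : ℕ) : ℝ :=
  (xe b - xe a)/2 - r*((b:ℝ) - (a:ℝ))

lemma bcW_add (r : ℝ) (xe : ℕ → ℝ) (a b c : ℕ) :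
    bcW r xe a b + bcW r xe b c = bcW r xe a c := by unfold bcW; ring

lemma bcW_self (r : ℝ) (xe : ℕ → ℝ) (a : ℕ) : bcW r xe a a = 0 := by unfold bcW; ring

lemma bcW_shift (r L : ℝ) (xe : ℕ → ℝ) (n a b : ℕ)
    (ha : xe (a+n) = xe a + L) (hb : xe (b+n) = xe b + L) :
    bcW r xe (a+n) (b+n) = bcW r xe a b := by
  unfold bcW; rw [ha, hb]; push_cast; ring

/-- Lower bound: any covering placement with all movements `≤ m` satisfies
`(xe j - xe i)/2 - r (j-i) ≤ m` for each admissible pair `i < j < i + n`. -/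
lemma bcLB (n : ℕ) (L r : ℝ) (hr : 0 < r) (hL : 0 < L) (x xe : ℕ → ℝ)
    (hxe : ∀ k, 1 ≤ k → k ≤ n → xe k = x k)
    (hxe' : ∀ k, 1 ≤ k → k ≤ n → xe (k + n) = x k + L)
    (hmono : ∀ a b, 1 ≤ a → a ≤ b → b ≤ 2*n → xe a ≤ xe b)
    (i j : ℕ) (hi1 : 1 ≤ i) (hin : i ≤ n) (hij : i < j) (hjin : j < i + n)
    (y : ℕ → AddCircle L) (hcov : CycCovers n L r y)
    (m : ℝ) (hm0 : 0 ≤ m)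
    (hmove : ∀ k, 1 ≤ k → k ≤ n → dist ((x k : ℝ) : AddCircle L) (y k) ≤ m) :
    bcW r xe i j ≤ m := by
  unfold bcW
  by_contra hcon
  push_neg at hcon
  set lam := (xe j - xe i)/2 - r * ((j:ℝ) - (i:ℝ)) with hlam
  have hxiL : xe (i+n) = xe i + L := by rw [hxe' i hi1 hin, hxe i hi1 hin]
  have hd : xe j - xe i = 2*lam + 2*r*((j:ℝ)-(i:ℝ)) := by rw [hlam]; ring
  have hjL : xe j ≤ xe i + L := by
    have := hmono j (i+n) (by omega) (by omega) (by omega)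
    rwa [hxiL] at this
  set N := j - i with hN
  have hN1 : 1 ≤ N := by omega
  have hNR : ((N:ℕ):ℝ) = (j:ℝ) - i := by rw [hN]; push_cast [Nat.cast_sub hij.le]; ring
  have hlm : 0 < lam - m := by linarith
  set ε := (lam - m)/((N:ℝ)+1) with hε
  have hNpos : (0:ℝ) < (N:ℝ) + 1 := by positivity
  have hε0 : 0 < ε := div_pos hlm hNpos
  have hNε : (N:ℝ)*ε ≤ lam - m := by
    have h1 : ((N:ℝ)+1) * ε = lam - m := by rw [hε]; field_simp
    nlinarith
  set pf : ℕ → ℝ := fun s => xe i + m + r + ε + s*(2*r+ε) with hpf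
  have hplo : ∀ s : ℕ, xe i + m + r < pf s := by
    intro s
    have : (0:ℝ) ≤ (s:ℝ)*(2*r+ε) := by positivity
    simp only [hpf]; linarith
  have hphi : ∀ s : ℕ, s < N → pf s < xe j - m - r := by
    intro s hs
    have hsle : (s:ℝ) + 1 ≤ (N:ℝ) := by exact_mod_cast Nat.succ_le_of_lt hs
    have h2 : (s:ℝ)*(2*r+ε) ≤ ((N:ℝ)-1)*(2*r+ε) := by nlinarith
    simp only [hpf]
    have h3 : ((N:ℝ)-1)*(2*r+ε) = 2*r*((N:ℝ)-1) + (N:ℝ)*ε - ε := by ring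
    nlinarith [hNε, hd, hNR]
  have hpt : ∀ s : Fin N, ∃ k, (1 ≤ k ∧ k ≤ n) ∧ dist ((pf s : ℝ) : AddCircle L) (y k) ≤ r := by
    intro s
    obtain ⟨k, h1, h2, h3⟩ := hcov ((pf s : ℝ) : AddCircle L)
    exact ⟨k, ⟨h1, h2⟩, h3⟩
  choose k hk hkd using hpt
  set tf : Fin N → ℕ := fun s => if i ≤ k s then k s else k s + n with htf
  have htlo : ∀ s : Fin N, 1 ≤ tf s ∧ tf s ≤ 2*n := by
    intro s
    simp only [htf]
    have h1 := (hk s).1; have h2 := (hk s).2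
    split <;> omega
  have hxkt : ∀ s : Fin N, ((x (k s) : ℝ) : AddCircle L) = ((xe (tf s) : ℝ) : AddCircle L) := by
    intro s
    by_cases h : i ≤ k s
    · simp only [htf, if_pos h, hxe _ (hk s).1 (hk s).2]
    · simp only [htf, if_neg h, hxe' _ (hk s).1 (hk s).2]
      exact (AddCircle.coe_add_period L (x (k s))).symm
  have hq : ∀ s : Fin N, xe i ≤ xe (tf s) ∧ xe (tf s) ≤ xe i + L := by
    intro s
    have h1 := (hk s).1; have h2 := (hk s).2
    constructor
    · exact hmono i (tf s) hi1 (by simp only [htf]; split <;> omega) (htlo s).2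
    · have := hmono (tf s) (i+n) (htlo s).1 (by simp only [htf]; split <;> omega) (by omega)
      rwa [hxiL] at this
  have hdq : ∀ s : Fin N, dist ((pf s : ℝ) : AddCircle L) ((xe (tf s) :ℝ) : AddCircle L) ≤ m + r := by
    intro s
    have h1 : dist ((pf s : ℝ) : AddCircle L) ((xe (tf s) :ℝ) : AddCircle L) ≤
        dist ((pf s : ℝ) : AddCircle L) (y (k s)) + dist (y (k s)) ((xe (tf s) :ℝ) : AddCircle L) :=
      dist_triangle _ _ _
    have h2 : dist (y (k s)) ((xe (tf s) :ℝ) : AddCircle L) ≤ m := by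
      rw [← hxkt s, dist_comm]
      exact hmove _ (hk s).1 (hk s).2
    linarith [hkd s]
  have hmain : ∀ s : Fin N, i < tf s ∧ tf s < j := by
    intro s
    obtain ⟨z, hz⟩ := bcDistLift L (pf s) (xe (tf s))
    have habs : |pf s - xe (tf s) - z*L| ≤ m + r := by rw [← hz]; exact hdq s
    have hq1 := (hq s).1; have hq2 := (hq s).2
    have h1 := hplo s; have h2 := hphi s s.isLt
    have hz0 : z = 0 := by
      rcases lt_trichotomy z 0 with h | h | h
      · have hz1 : (z:ℝ) ≤ -1 := by exact_mod_cast Int.le_sub_one_of_lt h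
        have hzL : (z:ℝ)*L ≤ -L := by nlinarith
        have hv : pf s - xe (tf s) - z*L > m + r := by nlinarith [hzL]
        have := le_abs_self (pf s - xe (tf s) - z*L)
        linarith
      · exact h
      · have hz1 : (1:ℝ) ≤ (z:ℝ) := by exact_mod_cast h
        have hzL : L ≤ (z:ℝ)*L := by nlinarith
        have hv : pf s - xe (tf s) - z*L < -(m + r) := by nlinarith [hzL]
        have := neg_abs_le (pf s - xe (tf s) - z*L)
        linarith
    rw [hz0] at habs
    simp only [Int.cast_zero, zero_mul, sub_zero] at habs
    rw [abs_le] at habs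
    constructor
    · by_contra hcon2
      push_neg at hcon2
      have := hmono (tf s) i (htlo s).1 hcon2 (by omega)
      linarith [habs.2]
    · by_contra hcon2
      push_neg at hcon2
      have := hmono j (tf s) (by omega) hcon2 (htlo s).2
      linarith [habs.1]
  have hfar : ∀ s s' : Fin N, (s:ℕ) < (s':ℕ) → k s ≠ k s' := by
    intro s s' hlt heq
    have hd1 : dist ((pf s' : ℝ) : AddCircle L) ((pf s : ℝ) : AddCircle L) ≤ 2*r := by
      have h1 := dist_triangle ((pf s' : ℝ) : AddCircle L) (y (k s')) ((pf s : ℝ) : AddCircle L)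
      have h2 : dist (y (k s')) ((pf s : ℝ) : AddCircle L) ≤ r := by
        rw [dist_comm, ← heq]; exact hkd s
      linarith [hkd s']
    obtain ⟨z, hz⟩ := bcDistLift L (pf s') (pf s)
    have hDval : pf s' - pf s = ((s':ℝ) - (s:ℝ))*(2*r+ε) := by simp only [hpf]; ring
    have hs1 : (1:ℝ) ≤ (s':ℝ) - (s:ℝ) := by
      have h0 : (s:ℕ) + 1 ≤ (s':ℕ) := hlt
      have := (Nat.cast_le (α := ℝ)).2 h0
      push_cast at this; linarith
    have hDlo : 2*r + ε ≤ pf s' - pf s := by rw [hDval]; nlinarith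
    have hDhi : pf s' - pf s < L - 2*r := by
      nlinarith [hphi s' s'.isLt, hplo s]
    have hgt : 2*r < |pf s' - pf s - z*L| := by
      rcases lt_trichotomy z 0 with h | h | h
      · have hz1 : (z:ℝ) ≤ -1 := by exact_mod_cast Int.le_sub_one_of_lt h
        have hzL : (z:ℝ)*L ≤ -L := by nlinarith
        have hv : pf s' - pf s - z*L > 2*r := by nlinarith [hzL]
        linarith [le_abs_self (pf s' - pf s - z*L)]
      · rw [h]; simp only [Int.cast_zero, zero_mul, sub_zero]
        rw [abs_of_pos (by linarith)]
        linarith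
      · have hz1 : (1:ℝ) ≤ (z:ℝ) := by exact_mod_cast h
        have hzL : L ≤ (z:ℝ)*L := by nlinarith
        have hv : pf s' - pf s - z*L < -(2*r) := by nlinarith [hzL]
        linarith [neg_abs_le (pf s' - pf s - z*L)]
    rw [← hz] at hgt
    linarith
  have hinj : Function.Injective tf := by
    intro s s' h
    have hkk : k s = k s' := by
      have h1 := (hk s).1; have h2 := (hk s).2
      have h3 := (hk s').1; have h4 := (hk s').2
      simp only [htf] at h
      split at h <;> split at h <;> omega
    by_contra hne
    rcases Nat.lt_or_ge (s:ℕ) (s':ℕ) with hlt | hge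
    · exact hfar s s' hlt hkk
    · have hlt2 : (s':ℕ) < (s:ℕ) := by
        rcases Nat.lt_or_ge (s':ℕ) (s:ℕ) with h' | h'
        · exact h'
        · exact absurd (Fin.ext (le_antisymm (by omega : (s:ℕ) ≤ s') (by omega : (s':ℕ) ≤ s))) hne
      exact hfar s' s hlt2 hkk.symm
  have hcard : (Finset.univ : Finset (Fin N)).card ≤ (Finset.Ioo i j).card := by
    apply Finset.card_le_card_of_injOn tf
    · intro s _; exact Finset.mem_Ioo.2 (hmain s)
    · intro a _ b _ h; exact hinj h
  simp only [Finset.card_univ, Fintype.card_fin, Nat.card_Ioo] at hcard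
  omega

/-- The `b` sequence used for the greedy placement to the right of the critical chain. -/
noncomputable def bcB (lam : ℝ) (xe : ℕ → ℝ) (j : ℕ) : ℕ → ℝ :=
  fun s => if s = 0 then xe j - lam else xe (j + s) + lam

/-- The full list of (real-lifted) optimal positions around the cycle. -/
noncomputable def bcP (L r lam : ℝ) (xe : ℕ → ℝ) (n i j : ℕ) : ℕ → ℝ := fun t =>
  if t ≤ j then xe i + lam + 2*r*((t:ℝ) - (i:ℝ))
  else if t < i + n then bcGreedy r (bcB lam xe j) (t - j)
  else xe i + L + lam


/-- Simple cycle barrier coverage: if `λ* > 0`, then there exist a covering placement with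
maximum movement `λ*`, indices `i, j` with `1 ≤ i ≤ n` and `i < j < i + n`, and real lifts
`w i, …, w j` in attached positions (`w (t+1) = w t + 2r`), with `w i = xe i + λ*`
(sensor `i` moved clockwise by `λ*`) and `w j = xe j − λ*` (sensor `j` moved
counterclockwise by `λ*`), such that for `i ≤ t ≤ j` the sensor with index
`((t−1) mod n) + 1` is placed at the cycle point represented by `w t`. Here `xe` extends
the coordinates by `xe (k+n) = x k + L`. -/
theorem stmt16 (n : ℕ) (hn : 1 ≤ n) (L r : ℝ) (hr : 0 < r) (h2r : 2 * r < L)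
    (hcap : L ≤ 2 * n * r)
    (x : ℕ → ℝ) (hx0 : 0 < x 1) (hxL : x n < L)
    (hsort : ∀ i j, 1 ≤ i → i ≤ j → j ≤ n → x i ≤ x j)
    (xe : ℕ → ℝ)
    (hxe : ∀ k, 1 ≤ k → k ≤ n → xe k = x k)
    (hxe' : ∀ k, 1 ≤ k → k ≤ n → xe (k + n) = x k + L)
    (hlam : 0 < CycLamStar n L r x) :
    ∃ (y : ℕ → AddCircle L) (i j : ℕ) (w : ℕ → ℝ),
      CycCovers n L r y ∧
      CycMaxMove n L x y = CycLamStar n L r x ∧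
      1 ≤ i ∧ i ≤ n ∧ i < j ∧ j < i + n ∧
      (∀ t, i ≤ t → t < j → w (t + 1) = w t + 2 * r) ∧
      w i = xe i + CycLamStar n L r x ∧
      w j = xe j - CycLamStar n L r x ∧
      (∀ t, i ≤ t → t ≤ j → y ((t - 1) % n + 1) = ((w t : ℝ) : AddCircle L)) := by
  classical
  have hL : 0 < L := by linarith
  have hn2 : 2 ≤ n := by
    by_contra h
    have h1 : n = 1 := by omega
    subst h1
    norm_num at hcap
    linarith
  -- monotonicity of the extended coordinates on [1, 2n]
  have hmono : ∀ a b, 1 ≤ a → a ≤ b → b ≤ 2*n → xe a ≤ xe b := by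
    intro a b h1 h2 h3
    rcases le_or_gt b n with hb | hb
    · rw [hxe a h1 (h2.trans hb), hxe b (by omega) hb]
      exact hsort a b h1 h2 hb
    · rcases le_or_gt a n with ha | ha
      · obtain ⟨b', rfl⟩ : ∃ b', b = b' + n := ⟨b - n, by omega⟩
        rw [hxe a h1 ha, hxe' b' (by omega) (by omega)]
        have h4 : x a ≤ x n := hsort a n h1 ha le_rfl
        have h5 : x 1 ≤ x b' := hsort 1 b' le_rfl (by omega) (by omega)
        linarith
      · obtain ⟨a', rfl⟩ : ∃ a', a = a' + n := ⟨a - n, by omega⟩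
        obtain ⟨b', rfl⟩ : ∃ b', b = b' + n := ⟨b - n, by omega⟩
        rw [hxe' a' (by omega) (by omega), hxe' b' (by omega) (by omega)]
        have h4 : x a' ≤ x b' := hsort a' b' (by omega) (by omega) (by omega)
        linarith
  have hshift : ∀ a, 1 ≤ a → a ≤ n → xe (a+n) = xe a + L := by
    intro a h1 h2
    rw [hxe' a h1 h2, hxe a h1 h2]
  -- the maximizing pair
  set S : Finset (ℕ × ℕ) :=
    (Finset.Icc 1 n ×ˢ Finset.Icc 1 (2*n)).filter (fun q => q.1 < q.2 ∧ q.2 < q.1 + n) with hSdef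
  have hSmem : ∀ q : ℕ × ℕ, q ∈ S ↔ (1 ≤ q.1 ∧ q.1 ≤ n) ∧ (1 ≤ q.2 ∧ q.2 ≤ 2*n) ∧ q.1 < q.2 ∧ q.2 < q.1 + n := by
    intro q
    simp only [hSdef, Finset.mem_filter, Finset.mem_product, Finset.mem_Icc]
    tauto
  have hSne : S.Nonempty := ⟨(1, 2), (hSmem (1,2)).2 (by omega)⟩
  obtain ⟨ij, hijmem, hijmax⟩ := S.exists_max_image (fun q => bcW r xe q.1 q.2) hSne
  obtain ⟨i, j⟩ := ij
  rw [hSmem] at hijmem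
  obtain ⟨⟨hi1, hin⟩, ⟨hj1, hj2n⟩, hij, hjin⟩ := hijmem
  set lam := bcW r xe i j with hlamdef
  have hmax : ∀ a b, 1 ≤ a → a ≤ n → a < b → b < a + n → bcW r xe a b ≤ lam := by
    intro a b h1 h2 h3 h4
    exact hijmax (a, b) ((hSmem (a,b)).2 (by omega))
  have hxiL : xe (i+n) = xe i + L := hshift i hi1 hin
  -- basic quantities
  have hWiin : bcW r xe i (i+n) ≤ 0 := by
    unfold bcW
    rw [hxiL]
    push_cast
    nlinarith [hcap]
  have hbddA : ∀ y' : ℕ → AddCircle L,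
      BddAbove ((fun k => dist ((x k : ℝ) : AddCircle L) (y' k)) '' Set.Icc 1 n) :=
    fun y' => ((Set.finite_Icc 1 n).image _).bddAbove
  have hmemmove : ∀ (y' : ℕ → AddCircle L) (k : ℕ), 1 ≤ k → k ≤ n →
      dist ((x k : ℝ) : AddCircle L) (y' k) ≤ CycMaxMove n L x y' := by
    intro y' k h1 h2
    exact le_csSup (hbddA y') ⟨k, Set.mem_Icc.2 ⟨h1, h2⟩, rfl⟩
  have hMMnonneg : ∀ y' : ℕ → AddCircle L, 0 ≤ CycMaxMove n L x y' :=
    fun y' => le_trans dist_nonneg (hmemmove y' 1 le_rfl hn)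
  have hbddB : BddBelow (CycMaxMove n L x '' {y : ℕ → AddCircle L | CycCovers n L r y}) := by
    refine ⟨0, ?_⟩
    rintro m ⟨y', _, rfl⟩
    exact hMMnonneg y'
  -- positivity of lam
  have hlam0 : 0 < lam := by
    by_contra hcon
    push_neg at hcon
    set y0 : ℕ → AddCircle L := fun k => ((x k : ℝ) : AddCircle L) with hy0
    have hgap : ∀ t, 1 ≤ t → t < n + 1 → xe (t+1) ≤ xe t + 2*r := by
      intro t h1 h2
      have h3 := hmax t (t+1) h1 (by omega) (by omega) (by omega)
      unfold bcW at h3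
      push_cast at h3
      linarith
    have hcov0 : CycCovers n L r y0 := by
      intro p
      obtain ⟨z, hzmem, hzp⟩ := bcRep L hL (xe 1 - r) p
      have hx1L : xe (n+1) = xe 1 + L := by rw [Nat.add_comm n 1]; exact hshift 1 le_rfl (by omega)
      obtain ⟨t, ht1, ht2, ht3⟩ := bcCover r xe 1 (n+1) (by omega) hgap z hzmem.1
        (by rw [hx1L]; have := hzmem.2; linarith)
      rcases le_or_gt t n with htn | htn
      · refine ⟨t, by omega, htn, ?_⟩
        rw [← hzp]
        have he : y0 t = ((xe t : ℝ) : AddCircle L) := by rw [hy0]; simp only; rw [hxe t (by omega) htn]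
        rw [he]
        exact le_trans (bcDistCoeLe L hL z (xe t)) ht3
      · have htt : t = n + 1 := by omega
        subst htt
        refine ⟨1, le_rfl, hn, ?_⟩
        rw [← hzp]
        have he : y0 1 = ((xe (n+1) : ℝ) : AddCircle L) := by
          rw [hy0]; simp only
          rw [hx1L, hxe 1 le_rfl hn]
          exact (AddCircle.coe_add_period L (x 1)).symm
        rw [he]
        exact le_trans (bcDistCoeLe L hL z (xe (n+1))) ht3
    have hMM0 : CycMaxMove n L x y0 = 0 := by
      unfold CycMaxMove
      have himg : ((fun k => dist ((x k : ℝ) : AddCircle L) (y0 k)) '' Set.Icc 1 n) = {0} := by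
        apply Set.eq_singleton_iff_unique_mem.2
        constructor
        · exact ⟨1, Set.mem_Icc.2 ⟨le_rfl, hn⟩, dist_self _⟩
        · rintro z ⟨kk, _, rfl⟩; exact dist_self _
      rw [himg, csSup_singleton]
    have hls : CycLamStar n L r x ≤ 0 := by
      unfold CycLamStar
      rw [← hMM0]
      exact csInf_le hbddB ⟨y0, hcov0, rfl⟩
    linarith
  have hLBfull : ∀ y' : ℕ → AddCircle L, CycCovers n L r y' → lam ≤ CycMaxMove n L x y' := by
    intro y' hy'
    exact bcLB n L r hr hL x xe hxe hxe' hmono i j hi1 hin hij hjin y' hy'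
      (CycMaxMove n L x y') (hMMnonneg y') (fun k h1 h2 => hmemmove y' k h1 h2)
  have hd2 : xe j = xe i + 2*lam + 2*r*((j:ℝ) - (i:ℝ)) := by
    rw [hlamdef]; unfold bcW; ring
  -- the structural inequalities
  have hF1 : ∀ t, j < t → t < i + n → bcW r xe j t ≤ 0 := by
    intro t h1 h2
    have h3 := hmax i t hi1 hin (by omega) (by omega)
    have h4 := bcW_add r xe i j t
    rw [← hlamdef] at h4
    linarith
  have hF2 : ∀ a b, j < a → a < b → b < i + n → bcW r xe a b ≤ lam := by
    intro a b h1 h2 h3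
    rcases le_or_gt a n with ha | ha
    · exact hmax a b (by omega) ha h2 (by omega)
    · obtain ⟨a', rfl⟩ : ∃ a', a = a' + n := ⟨a - n, by omega⟩
      obtain ⟨b', rfl⟩ : ∃ b', b = b' + n := ⟨b - n, by omega⟩
      rw [bcW_shift r L xe n a' b' (hshift a' (by omega) (by omega)) (hshift b' (by omega) (by omega))]
      exact hmax a' b' (by omega) (by omega) (by omega) (by omega)
  have hF3 : ∀ s, j < s → s < i + n → bcW r xe s (i+n) ≤ 0 := by
    intro s h1 h2
    rcases le_or_gt s n with hs | hs
    · have hjn : j < n := lt_of_lt_of_le h1 hs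
      have e1 : bcW r xe (i+n) (j+n) = bcW r xe i j :=
        bcW_shift r L xe n i j hxiL (hshift j hj1 hjn.le)
      have e2 := bcW_add r xe s (i+n) (j+n)
      rw [e1, ← hlamdef] at e2
      have h3 := hmax s (j+n) (by omega) hs (by omega) (by omega)
      linarith
    · obtain ⟨s', rfl⟩ : ∃ s', s = s' + n := ⟨s - n, by omega⟩
      have e1 : bcW r xe (s'+n) (i+n) = bcW r xe s' i :=
        bcW_shift r L xe n s' i (hshift s' (by omega) (by omega)) hxiL
      have e2 := bcW_add r xe s' i j
      rw [← hlamdef] at e2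
      have h3 := hmax s' j (by omega) (by omega) (by omega) (by omega)
      linarith
  have hF4 : ∀ t, i ≤ t → t ≤ j → 0 ≤ bcW r xe i t ∧ bcW r xe i t ≤ lam := by
    intro t h1 h2
    constructor
    · have e := bcW_add r xe i t j
      rw [← hlamdef] at e
      have h3 : bcW r xe t j ≤ lam := by
        rcases eq_or_lt_of_le h2 with h2' | h2'
        · subst h2'; rw [bcW_self]; exact hlam0.le
        · rcases eq_or_lt_of_le h1 with h1' | h1'
          · subst h1'; exact le_of_eq hlamdef.symm
          · rcases le_or_gt t n with ht | ht
            · exact hmax t j (by omega) ht h2' (by omega)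
            · obtain ⟨t', rfl⟩ : ∃ t', t = t' + n := ⟨t - n, by omega⟩
              obtain ⟨j', rfl⟩ : ∃ j', j = j' + n := ⟨j - n, by omega⟩
              rw [bcW_shift r L xe n t' j' (hshift t' (by omega) (by omega))
                (hshift j' (by omega) (by omega))]
              exact hmax t' j' (by omega) (by omega) (by omega) (by omega)
      linarith
    · rcases eq_or_lt_of_le h1 with h1' | h1'
      · rw [← h1', bcW_self]; exact hlam0.le
      · rcases eq_or_lt_of_le h2 with h2' | h2'
        · subst h2'; exact le_of_eq hlamdef.symm
        · exact hmax i t hi1 hin h1' (by omega)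
  -- greedy placement bounds
  have hvlb : ∀ s, 1 ≤ s → j + s < i + n → xe (j+s) - lam ≤ bcGreedy r (bcB lam xe j) s := by
    intro s hs1 hs2
    apply bcGreedy_lb
    intro u hu
    rcases Nat.eq_zero_or_pos u with hu0 | hu0
    · subst hu0
      have h3 := hF1 (j+s) (by omega) hs2
      unfold bcW at h3
      simp only [bcB, if_pos rfl]
      rw [Nat.sub_zero]
      push_cast at h3 ⊢
      linarith
    · rcases eq_or_lt_of_le hu with hu' | hu'
      · rw [hu']
        simp only [bcB, if_neg (by omega : ¬ s = 0), Nat.sub_self]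
        push_cast
        linarith [hlam0]
      · have h3 := hF2 (j+u) (j+s) (by omega) (by omega) hs2
        unfold bcW at h3
        simp only [bcB, if_neg (by omega : ¬ u = 0)]
        rw [Nat.cast_sub hu]
        push_cast at h3 ⊢
        linarith
  have hvub : ∀ s, 1 ≤ s → bcGreedy r (bcB lam xe j) s ≤ xe (j+s) + lam := by
    intro s hs
    have h1 := bcGreedy_le r (bcB lam xe j) s
    simp only [bcB, if_neg (by omega : ¬ s = 0)] at h1
    exact h1
  set P : ℕ → ℝ := bcP L r lam xe n i j with hPdef
  have hPchain : ∀ t, t ≤ j → P t = xe i + lam + 2*r*((t:ℝ) - (i:ℝ)) := by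
    intro t h; rw [hPdef]; unfold bcP; rw [if_pos h]
  have hPmid : ∀ t, j < t → t < i + n → P t = bcGreedy r (bcB lam xe j) (t - j) := by
    intro t h1 h2; rw [hPdef]; unfold bcP; rw [if_neg (by omega), if_pos h2]
  have hPfin : P (i+n) = xe i + L + lam := by
    rw [hPdef]; unfold bcP; rw [if_neg (by omega), if_neg (by omega)]
  have hgapP : ∀ t, i ≤ t → t < i + n → P (t+1) ≤ P t + 2*r := by
    intro t ht1 ht2
    rcases le_or_gt (t+1) j with hc1 | hc1
    · rw [hPchain (t+1) hc1, hPchain t (by omega)]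
      push_cast
      linarith
    · have htj : j ≤ t := by omega
      rcases Nat.lt_or_ge (t+1) (i+n) with hc2 | hc2
      · rcases eq_or_lt_of_le htj with h3 | h3
        · -- t = j : junction between the chain and the greedy part
          rw [← h3] at hc2 ⊢
          rw [hPmid (j+1) (by omega) hc2, hPchain j le_rfl]
          have e0 : bcGreedy r (bcB lam xe j) 0 = xe j - lam := by
            simp [bcGreedy, bcB]
          have e1 := bcGreedy_step r (bcB lam xe j) 0
          have e2 : j + 1 - j = 1 := by omega
          rw [e2]
          have e3 : xe i + lam + 2*r*((j:ℝ) - (i:ℝ)) = xe j - lam := by linarith [hd2]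
          linarith [e1, e0]
        · rw [hPmid (t+1) (by omega) hc2, hPmid t h3 (by omega)]
          have e2 : t + 1 - j = (t - j) + 1 := by omega
          rw [e2]
          exact bcGreedy_step _ _ _
      · have hc2' : t + 1 = i + n := by omega
        rw [hc2', hPfin]
        rcases eq_or_lt_of_le htj with h3 | h3
        · -- t = j : the chain together with sensor i again covers everything
          rw [← h3]
          rw [hPchain j le_rfl]
          have hcast : (j:ℝ) + 1 = (i:ℝ) + (n:ℝ) := by
            have h4 : j + 1 = i + n := by omega
            exact_mod_cast congrArg (fun m : ℕ => (m:ℝ)) h4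
          nlinarith [hcap, hr]
        · rw [hPmid t h3 (by omega)]
          have key : xe (i+n) + lam - 2*r ≤ bcGreedy r (bcB lam xe j) (t - j) := by
            apply bcGreedy_lb
            intro u hu
            rcases Nat.eq_zero_or_pos u with hu0 | hu0
            · subst hu0
              have hb0 : bcB lam xe j 0 = xe j - lam := by simp [bcB]
              rw [hb0, Nat.sub_zero]
              have hc1' : ((t - j:ℕ):ℝ) = (t:ℝ) - (j:ℝ) := Nat.cast_sub h3.le
              have hc2'' : (t:ℝ) + 1 = (i:ℝ) + (n:ℝ) := by
                exact_mod_cast congrArg (fun m : ℕ => (m:ℝ)) hc2'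
              rw [hc1', hxiL]
              rw [show ((t:ℝ) - (j:ℝ)) = ((i:ℝ) + (n:ℝ) - 1 - (j:ℝ)) from by linarith]
              linarith [hcap, hd2]
            · have h5 := hF3 (j+u) (by omega) (by omega : j + u < i + n)
              unfold bcW at h5
              simp only [bcB, if_neg (by omega : ¬ u = 0)]
              have hc1' : ((t - j - u:ℕ):ℝ) = (t:ℝ) - (j:ℝ) - (u:ℝ) := by
                have h6 : t - j - u = t - (j + u) := by omega
                rw [h6, Nat.cast_sub (by omega : j + u ≤ t)]; push_cast; ring
              rw [hc1']
              have hc2'' : (t:ℝ) + 1 = (i:ℝ) + (n:ℝ) := by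
                exact_mod_cast congrArg (fun m : ℕ => (m:ℝ)) hc2'
              push_cast at h5 ⊢
              rw [show ((t:ℝ) - (j:ℝ) - (u:ℝ)) = ((i:ℝ) + (n:ℝ) - (j:ℝ) - (u:ℝ) - 1) from by
                linarith]
              linarith [h5]
          linarith [key, hxiL.le, hxiL.ge]
  -- the optimal placement
  set y : ℕ → AddCircle L := fun k => ((P (if i ≤ k then k else k + n) : ℝ) : AddCircle L) with hydef
  have hPi : P i = xe i + lam := by rw [hPchain i hij.le]; ring
  have hPL : P (i+n) = P i + L := by rw [hPfin, hPi]; ring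
  have hcovY : CycCovers n L r y := by
    intro p
    obtain ⟨z, hzmem, hzp⟩ := bcRep L hL (P i - r) p
    obtain ⟨t, ht1, ht2, ht3⟩ := bcCover r P i (i+n) (by omega) hgapP z hzmem.1
      (by rw [hPL]; have := hzmem.2; linarith)
    rcases le_or_gt t n with htn | htn
    · refine ⟨t, by omega, htn, ?_⟩
      rw [← hzp]
      have hyt : y t = ((P t : ℝ) : AddCircle L) := by
        simp only [hydef]
        rw [if_pos (by omega : i ≤ t)]
      rw [hyt]
      exact le_trans (bcDistCoeLe L hL z (P t)) ht3
    · rcases Nat.lt_or_ge t (i+n) with htin | htin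
      · refine ⟨t - n, by omega, by omega, ?_⟩
        rw [← hzp]
        have hyt : y (t - n) = ((P t : ℝ) : AddCircle L) := by
          simp only [hydef]
          rw [if_neg (by omega : ¬ i ≤ t - n)]
          have h6 : t - n + n = t := by omega
          rw [h6]
        rw [hyt]
        exact le_trans (bcDistCoeLe L hL z (P t)) ht3
      · have htt : t = i + n := by omega
        refine ⟨i, hi1, hin, ?_⟩
        rw [← hzp]
        have hyt : y i = ((P (i+n) : ℝ) : AddCircle L) := by
          simp only [hydef]
          rw [if_pos le_rfl, hPL]
          exact (AddCircle.coe_add_period L (P i)).symm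
        rw [hyt]
        refine le_trans (bcDistCoeLe L hL z (P (i+n))) ?_
        rw [← htt]; exact ht3
  have hmovesY : ∀ k, 1 ≤ k → k ≤ n → dist ((x k : ℝ) : AddCircle L) (y k) ≤ lam := by
    intro k h1 h2
    by_cases h : i ≤ k
    · have hyk : y k = ((P k : ℝ) : AddCircle L) := by simp only [hydef]; rw [if_pos h]
      rw [hyk, ← hxe k h1 h2]
      refine le_trans (bcDistCoeLe L hL (xe k) (P k)) ?_
      rcases le_or_gt k j with hkj | hkj
      · rw [hPchain k hkj]
        have h4 := hF4 k h hkj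
        unfold bcW at h4
        rw [abs_le]
        constructor <;> linarith [h4.1, h4.2]
      · have hkin : k < i + n := by omega
        rw [hPmid k hkj hkin]
        have ha := hvlb (k-j) (by omega) (by omega : j + (k-j) < i + n)
        have hb := hvub (k-j) (by omega)
        have hs : j + (k-j) = k := by omega
        rw [hs] at ha hb
        rw [abs_le]
        constructor <;> linarith
    · have hyk : y k = ((P (k+n) : ℝ) : AddCircle L) := by simp only [hydef]; rw [if_neg h]
      rw [hyk]
      have hxk : ((x k : ℝ) : AddCircle L) = ((xe (k+n) : ℝ) : AddCircle L) := by
        rw [hxe' k h1 h2]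
        exact (AddCircle.coe_add_period L (x k)).symm
      rw [hxk]
      refine le_trans (bcDistCoeLe L hL (xe (k+n)) (P (k+n))) ?_
      rcases le_or_gt (k+n) j with hkj | hkj
      · rw [hPchain _ hkj]
        have h4 := hF4 (k+n) (by omega) hkj
        unfold bcW at h4
        rw [abs_le]
        constructor <;> linarith [h4.1, h4.2]
      · have hkin : k + n < i + n := by omega
        rw [hPmid _ hkj hkin]
        have ha := hvlb (k+n-j) (by omega) (by omega : j + (k+n-j) < i + n)
        have hb := hvub (k+n-j) (by omega)
        have hs : j + (k+n-j) = k+n := by omega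
        rw [hs] at ha hb
        rw [abs_le]
        constructor <;> linarith
  have hMMle : CycMaxMove n L x y ≤ lam := by
    unfold CycMaxMove
    refine csSup_le ⟨dist ((x 1 : ℝ) : AddCircle L) (y 1), ⟨1, Set.mem_Icc.2 ⟨le_rfl, hn⟩, rfl⟩⟩ ?_
    rintro z ⟨kk, hkk, rfl⟩
    obtain ⟨ha, hb⟩ := Set.mem_Icc.1 hkk
    exact hmovesY kk ha hb
  have hMMy : CycMaxMove n L x y = lam := le_antisymm hMMle (hLBfull y hcovY)
  have hstar : CycLamStar n L r x = lam := by
    unfold CycLamStar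
    apply le_antisymm
    · rw [← hMMy]
      exact csInf_le hbddB ⟨y, hcovY, rfl⟩
    · refine le_csInf ⟨CycMaxMove n L x y, Set.mem_image_of_mem _ hcovY⟩ ?_
      rintro z ⟨y', hy', rfl⟩
      exact hLBfull y' hy'
  refine ⟨y, i, j, fun t => xe i + lam + 2*r*((t:ℝ) - (i:ℝ)), hcovY, by rw [hstar]; exact hMMy,
    hi1, hin, hij, hjin, ?_, ?_, ?_, ?_⟩
  · intro t _ _
    show xe i + lam + 2*r*(((t+1:ℕ):ℝ) - (i:ℝ)) = xe i + lam + 2*r*((t:ℝ) - (i:ℝ)) + 2*r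
    push_cast
    ring
  · show xe i + lam + 2*r*((i:ℝ) - (i:ℝ)) = xe i + CycLamStar n L r x
    rw [hstar]; ring
  · show xe i + lam + 2*r*((j:ℝ) - (i:ℝ)) = xe j - CycLamStar n L r x
    rw [hstar]; linarith [hd2]
  · intro t ht1 ht2
    show y ((t - 1) % n + 1) = ((xe i + lam + 2*r*((t:ℝ) - (i:ℝ)) : ℝ) : AddCircle L)
    rw [← hPchain t ht2]
    rcases le_or_gt t n with htn | htn
    · have hk : (t-1) % n + 1 = t := by
        have h5 : t - 1 < n := by omega
        rw [Nat.mod_eq_of_lt h5]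
        omega
      rw [hk]
      simp only [hydef]
      rw [if_pos (by omega : i ≤ t)]
    · have hk : (t-1) % n + 1 = t - n := by
        have h5 : n ≤ t - 1 := by omega
        rw [Nat.mod_eq_sub_mod h5, Nat.mod_eq_of_lt (by omega : t - 1 - n < n)]
        omega
      rw [hk]
      simp only [hydef]
      rw [if_neg (by omega : ¬ i ≤ t - n)]
      have h6 : t - n + n = t := by omega
      rw [h6]
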